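/- In the pure braid group P_3 with generators A_{1,2}, A_{1,3}, A_{2,3}, the cyclic subgroups generated by A_{1,2} A_{1,3} A_{2,3} A_{1,2} and by A_{1,2} A_{1,3} A_{2,3} intersect trivially. -/

import Mathlib

open scoped commutatorElement

/-- Artin's braid relations on `k` generators `σ_1, …, σ_k` (0-indexed internally):
far commutation and the braid relation. -/
def braidRels (k : ℕ) : Set (FreeGroup (Fin k)) :=
  { r | (∃ i j : Fin k, (i : ℕ) + 2 ≤ (j : ℕ) ∧
          r = ⁅FreeGroup.of i, FreeGroup.of j⁆) ∨
        (∃ i j : Fin k, (j : ℕ) = (i : ℕ) + 1 ∧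
          r = FreeGroup.of i * FreeGroup.of j * FreeGroup.of i *
              (FreeGroup.of j * FreeGroup.of i * FreeGroup.of j)⁻¹) }

/-- The braid group on `n` strands, given by the Artin presentation. -/
abbrev BraidGroup (n : ℕ) : Type := PresentedGroup (braidRels (n - 1))

/-- The Artin generator `σ_i` (1-based, `1 ≤ i ≤ n-1`) of `BraidGroup n`. -/
def braidSigma (n i : ℕ) : BraidGroup n :=
  if h : 1 ≤ i ∧ i - 1 < n - 1 then PresentedGroup.of ⟨i - 1, h.2⟩ else 1

/-- The standard pure braid generator `A_{i,j}` for `1 ≤ i < j ≤ n`: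
`A_{i,j} = (σ_{j-1} ⋯ σ_{i+1}) σ_i² (σ_{j-1} ⋯ σ_{i+1})⁻¹`. -/
def braidAgen (n i j : ℕ) : BraidGroup n :=
  (((List.range' (i + 1) (j - 1 - i)).map (braidSigma n)).reverse).prod *
    (braidSigma n i) ^ 2 *
    ((((List.range' (i + 1) (j - 1 - i)).map (braidSigma n)).reverse).prod)⁻¹

/-- `A_{i,j}` with the symmetry convention `A_{j,i} = A_{i,j}` and `A_{i,i} = 1`. -/
def braidA (n i j : ℕ) : BraidGroup n :=
  if i < j then braidAgen n i j else if j < i then braidAgen n j i else 1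

/-- `A_{0,i} := (A_{1,i} A_{2,i} ⋯ A_{n,i})⁻¹`. -/
def braidA0 (n i : ℕ) : BraidGroup n :=
  (((List.range' 1 n).map fun k => braidA n k i).prod)⁻¹

/-- The full twist `z_n = ∏_{j=2}^{n} (A_{1,j} A_{2,j} ⋯ A_{j-1,j})`. -/
def fullTwist (n : ℕ) : BraidGroup n :=
  ((List.range' 1 n).map fun j =>
    ((List.range' 1 (j - 1)).map fun i => braidA n i j).prod).prod

/-- The pure braid group `P_n`, as the subgroup of `BraidGroup n` generated by the
elements `A_{i,j}`, `1 ≤ i < j ≤ n`. -/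
def PureBraid (n : ℕ) : Subgroup (BraidGroup n) :=
  Subgroup.closure { g | ∃ i j : ℕ, 1 ≤ i ∧ i < j ∧ j ≤ n ∧ g = braidA n i j }

/-- `t_i := A_{1,i} A_{2,i} ⋯ A_{i-1,i}`. -/
def braidT (n i : ℕ) : BraidGroup n :=
  ((List.range' 1 (i - 1)).map fun k => braidA n k i).prod

/-- `Ã_{0,i} := A_{0,i} · t_i²`. -/
def braidA0tilde (n i : ℕ) : BraidGroup n :=
  braidA0 n i * (braidT n i) ^ 2


namespace ZPIT

abbrev SL2 := Matrix.SpecialLinearGroup (Fin 2) ℤ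

def S1 : SL2 := ⟨!![1,1;0,1], by decide⟩
def S2 : SL2 := ⟨!![1,0;-1,1], by decide⟩
def fgen : Fin (3 - 1) → SL2 := ![S1, S2]

lemma frel : ∀ r ∈ braidRels (3 - 1), FreeGroup.lift fgen r = 1 := by
  rintro r (⟨i, j, hij, rfl⟩ | ⟨i, j, hij, rfl⟩)
  · exact absurd hij (by have := j.isLt; omega)
  · fin_cases i <;> fin_cases j <;>
      simp only [Fin.isValue, Fin.val_zero, Fin.val_one] at hij ⊢ <;>
      first
      | omega
      | (simp only [map_mul, map_inv, FreeGroup.lift_apply_of, fgen,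
           Matrix.cons_val_zero, Matrix.cons_val_one, Matrix.head_cons]
         ext a b; fin_cases a <;> fin_cases b <;> decide)

/-- The Burau-type representation `B₃ → SL(2,ℤ)`, `σ₁ ↦ S1`, `σ₂ ↦ S2`. -/
def phi : BraidGroup 3 →* SL2 := PresentedGroup.toGroup frel

lemma phi_s1 : phi (braidSigma 3 1) = S1 := by
  rw [braidSigma, dif_pos (by omega)]; exact PresentedGroup.toGroup.of frel

lemma phi_s2 : phi (braidSigma 3 2) = S2 := by
  rw [braidSigma, dif_pos (by omega)]; exact PresentedGroup.toGroup.of frel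

lemma bA12 : braidA 3 1 2 = braidSigma 3 1 ^ 2 := by
  simp [braidA, braidAgen, List.range']

lemma bA13 : braidA 3 1 3 = braidSigma 3 2 * braidSigma 3 1 ^ 2 * (braidSigma 3 2)⁻¹ := by
  simp [braidA, braidAgen, List.range']

lemma bA23 : braidA 3 2 3 = braidSigma 3 2 ^ 2 := by
  simp [braidA, braidAgen, List.range']

def Tm : SL2 := ⟨!![1,4;0,1], by decide⟩
def Tinv : SL2 := ⟨!![1,-4;0,1], by decide⟩

lemma phi_w_sq :
    phi (braidA 3 1 2 * braidA 3 1 3 * braidA 3 2 3 * braidA 3 1 2) ^ 2 = Tm := by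
  rw [bA12, bA13, bA23]
  simp only [map_mul, map_inv, map_pow, phi_s1, phi_s2]
  ext a b; fin_cases a <;> fin_cases b <;> decide

lemma phi_z_sq :
    phi (braidA 3 1 2 * braidA 3 1 3 * braidA 3 2 3) ^ 2 = 1 := by
  rw [bA12, bA13, bA23]
  simp only [map_mul, map_inv, map_pow, phi_s1, phi_s2]
  ext a b; fin_cases a <;> fin_cases b <;> decide

lemma Tm_inv : Tm⁻¹ = Tinv := by
  apply inv_eq_of_mul_eq_one_right
  ext a b; fin_cases a <;> fin_cases b <;> decide

lemma Tm_pow (m : ℤ) : (Tm ^ m : SL2).val = !![1, 4*m; 0, 1] := by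
  induction m using Int.induction_on with
  | zero => ext a b; fin_cases a <;> fin_cases b <;> simp
  | succ n ih =>
      rw [zpow_add_one, Matrix.SpecialLinearGroup.coe_mul, ih]
      ext a b
      fin_cases a <;> fin_cases b <;>
        simp [Tm, Matrix.mul_apply, Fin.sum_univ_two] <;> ring
  | pred n ih =>
      rw [zpow_sub_one, Tm_inv, Matrix.SpecialLinearGroup.coe_mul, ih]
      ext a b
      fin_cases a <;> fin_cases b <;>
        simp [Tinv, Matrix.mul_apply, Fin.sum_univ_two] <;> ring

end ZPIT

/-- In `P_3`, the cyclic subgroups generated by `A_{1,2} A_{1,3} A_{2,3} A_{1,2}` and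
by `A_{1,2} A_{1,3} A_{2,3}` intersect trivially. -/
theorem zpowers_intersect_trivially :
    Subgroup.zpowers (braidA 3 1 2 * braidA 3 1 3 * braidA 3 2 3 * braidA 3 1 2) ⊓
      Subgroup.zpowers (braidA 3 1 2 * braidA 3 1 3 * braidA 3 2 3) = ⊥ := by
  rw [eq_bot_iff]
  rintro g ⟨⟨m, hm⟩, ⟨k, hk⟩⟩
  have h1 : ZPIT.phi g ^ 2 = ZPIT.Tm ^ m := by
    rw [← hm, map_zpow, ← zpow_natCast, ← zpow_mul, mul_comm, zpow_mul, zpow_natCast,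
      ZPIT.phi_w_sq]
  have h2 : ZPIT.phi g ^ 2 = 1 := by
    rw [← hk, map_zpow, ← zpow_natCast, ← zpow_mul, mul_comm, zpow_mul, zpow_natCast,
      ZPIT.phi_z_sq, one_zpow]
  have hm0 : m = 0 := by
    have hT : ZPIT.Tm ^ m = 1 := by rw [← h1, h2]
    have := ZPIT.Tm_pow m
    rw [hT] at this
    have h01 := congrFun (congrFun this 0) 1
    simp at h01
    omega
  rw [hm0] at hm
  simp [Subgroup.mem_bot, ← hm]
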